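/- Let $\Gamma$ be a $2$-$Y$-homogeneous $(Y,Y')$-distance-biregular graph with $D \ge 3$, $k' \ge 2$ and $c'_2 \ge 2$. Then $(k'-2)(c_2 - \gamma_2) = (k - c_2)(c'_2 - 1)$, where $k$ and $k'$ are the valencies of vertices in $Y$ and $Y'$ respectively. -/
import Mathlib


open SimpleGraph Set

open Finset

section
variable {V : Type} [Fintype V]
omit [Fintype V] in
lemma aux_step {G : SimpleGraph V} (hc : G.Connected) {x v : V} {k : ℕ}
    (h : G.dist x v = k + 1) : ∃ u, G.Adj u v ∧ G.dist x u = k := by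
  have h' : G.dist v x = k + 1 := by rwa [SimpleGraph.dist_comm]
  obtain ⟨p, hp⟩ := hc.exists_walk_length_eq_dist v x
  rw [h'] at hp
  cases p with
  | nil => simp at hp
  | @cons _ u _ ha q =>
    refine ⟨u, ha.symm, ?_⟩
    have hq : q.length = k := by simpa using hp
    have h1 : G.dist x u ≤ k := by
      have := SimpleGraph.dist_le q.reverse
      simpa [hq] using this
    have hduv : G.dist u v = 1 := SimpleGraph.dist_eq_one_iff_adj.mpr ha.symm
    have h2 : G.dist x v ≤ G.dist x u + G.dist u v := hc.dist_triangle
    rw [h, hduv] at h2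
    omega

omit [Fintype V] in
lemma aux_exists_dist {G : SimpleGraph V} (hc : G.Connected) (x : V) :
    ∀ d, ∀ v, G.dist x v = d → ∀ m, m ≤ d → ∃ u, G.dist x u = m := by
  intro d
  induction d with
  | zero =>
    intro v _ m hm
    exact ⟨x, by simp [Nat.le_zero.mp hm, SimpleGraph.dist_self]⟩
  | succ k ih =>
    intro v hv m hm
    rcases eq_or_lt_of_le hm with h | h
    · exact ⟨v, by rw [hv, h]⟩
    · obtain ⟨u, _, hu⟩ := aux_step hc hv
      exact ih u hu m (by omega)

lemma aux_ncard_filter {P : V → Prop} {Q : V → Prop} [DecidablePred Q]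
    (h : ∀ v, P v ↔ Q v) : {w | P w}.ncard = (Finset.univ.filter Q).card := by
  have hPQ : {w | P w} = {w | Q w} := Set.ext h
  rw [hPQ, Set.ncard_eq_toFinset_card', Set.toFinset_setOf]

lemma aux_sum_ite {P : V → Prop} [DecidablePred P] (a : ℕ) :
    (∑ z : V, if P z then a else 0) = (Finset.univ.filter P).card * a := by
  rw [← Finset.sum_filter, Finset.sum_const, smul_eq_mul]

lemma aux_split (P Q : V → Prop) [DecidablePred P] [DecidablePred Q] :
    (Finset.univ.filter (fun v => P v ∧ Q v)).card
      + (Finset.univ.filter (fun v => P v ∧ ¬ Q v)).card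
      = (Finset.univ.filter P).card := by
  rw [← Finset.filter_filter, ← Finset.filter_filter]
  exact Finset.card_filter_add_card_filter_not (p := Q)
end

/-- A `(Y,Y')`-distance-biregular graph: a finite connected bipartite graph in which
every vertex is distance-regularized, and vertices in the same color class share the
same intersection numbers (`c`, `b` for class `Y` and `c'`, `b'` for class `Y'`),
while the two color classes have different intersection arrays.
`D` (resp. `D'`) is the common eccentricity of vertices in `Y` (resp. `Y'`). -/
structure DBRG (V : Type) [Fintype V] where
  G : SimpleGraph V
  conn : G.Connected
  Y : Finset V
  Y' : Finset V
  Yne : Y.Nonempty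
  Y'ne : Y'.Nonempty
  cover : ∀ v, v ∈ Y ∨ v ∈ Y'
  disj : ∀ v, ¬(v ∈ Y ∧ v ∈ Y')
  bip : ∀ u v, G.Adj u v → (u ∈ Y ↔ v ∈ Y')
  D : ℕ
  D' : ℕ
  eccY : ∀ x ∈ Y, (∃ y, G.dist x y = D) ∧ ∀ y, G.dist x y ≤ D
  eccY' : ∀ x ∈ Y', (∃ y, G.dist x y = D') ∧ ∀ y, G.dist x y ≤ D'
  c : ℕ → ℕ
  b : ℕ → ℕ
  c' : ℕ → ℕ
  b' : ℕ → ℕ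
  hc : ∀ i, 1 ≤ i → ∀ x ∈ Y, ∀ z, G.dist x z = i →
    {w | G.Adj z w ∧ G.dist x w = i - 1}.ncard = c i
  hb : ∀ i, ∀ x ∈ Y, ∀ z, G.dist x z = i →
    {w | G.Adj z w ∧ G.dist x w = i + 1}.ncard = b i
  hc' : ∀ i, 1 ≤ i → ∀ x ∈ Y', ∀ z, G.dist x z = i →
    {w | G.Adj z w ∧ G.dist x w = i - 1}.ncard = c' i
  hb' : ∀ i, ∀ x ∈ Y', ∀ z, G.dist x z = i →
    {w | G.Adj z w ∧ G.dist x w = i + 1}.ncard = b' i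
  c0 : c 0 = 0
  c'0 : c' 0 = 0
  nonreg : ¬ (∀ i, c i = c' i ∧ b i = b' i)

/-- `Γ` is `2`-`Y`-homogeneous with parameters `γ i`: for all `1 ≤ i ≤ D - 1` and all
`x ∈ Y`, `y ∈ Γ₂(x)`, `z ∈ Γ_{i,i}(x,y)`, the number of common neighbours of `x` and `y`
at distance `i - 1` from `z` equals `γ i` (independently of `x`, `y`, `z`). -/
def DBRG.TwoYHom {V : Type} [Fintype V] (Γ : DBRG V) (γ : ℕ → ℕ) : Prop :=
  ∀ i, 1 ≤ i → i ≤ Γ.D - 1 → ∀ x ∈ Γ.Y, ∀ y, Γ.G.dist x y = 2 →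
    ∀ z, Γ.G.dist x z = i → Γ.G.dist y z = i →
      {w | Γ.G.dist z w = i - 1 ∧ Γ.G.Adj x w ∧ Γ.G.Adj y w}.ncard = γ i
theorem stmt_16 {V : Type} [Fintype V] (Γ : DBRG V) (hD : 3 ≤ Γ.D)
    (γ : ℕ → ℕ) (hhom : Γ.TwoYHom γ) (hk' : 2 ≤ Γ.b' 0) (hc2' : 2 ≤ Γ.c' 2) :
    ((Γ.b' 0 : ℤ) - 2) * ((Γ.c 2 : ℤ) - (γ 2 : ℤ)) =
      ((Γ.b 0 : ℤ) - (Γ.c 2 : ℤ)) * ((Γ.c' 2 : ℤ) - 1) := by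
  classical
  obtain ⟨x, hx⟩ := Γ.Yne
  set G := Γ.G with hG
  have hconn : G.Connected := Γ.conn
  have sideY' : ∀ {a b : V}, G.Adj a b → a ∈ Γ.Y → b ∈ Γ.Y' :=
    fun hab ha => (Γ.bip _ _ hab).mp ha
  have sideY : ∀ {a b : V}, G.Adj a b → a ∈ Γ.Y' → b ∈ Γ.Y := by
    intro a b hab ha'
    rcases Γ.cover b with hb | hb'
    · exact hb
    · exact absurd ⟨(Γ.bip _ _ hab).mpr hb', ha'⟩ (Γ.disj a)
  obtain ⟨v, hv⟩ := (Γ.eccY x hx).1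
  obtain ⟨y, hy2⟩ := aux_exists_dist hconn x _ v hv 2 (by omega)
  obtain ⟨w, hwy, hw1⟩ := aux_step hconn (show G.dist x y = 1 + 1 from hy2)
  have hxw : G.Adj x w := SimpleGraph.dist_eq_one_iff_adj.mp hw1
  have hwY' : w ∈ Γ.Y' := sideY' hxw hx
  have hyY : y ∈ Γ.Y := sideY hwy hwY'
  have hxy_ne : x ≠ y := by
    intro h; rw [h, SimpleGraph.dist_self] at hy2; omega
  have hwx : G.Adj w x := hxw.symm
  have hyw : G.Adj y w := hwy.symm
  have hdyw : G.dist y w = 1 := SimpleGraph.dist_eq_one_iff_adj.mpr hyw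
  have dist2Y : ∀ a ∈ Γ.Y, ∀ z : V, G.dist a z = 2 → z ∈ Γ.Y := by
    intro a ha z hz
    obtain ⟨t, htz, ht1⟩ := aux_step hconn (show G.dist a z = 1 + 1 from hz)
    exact sideY htz (sideY' (SimpleGraph.dist_eq_one_iff_adj.mp ht1) ha)
  have zfacts : ∀ z : V, G.Adj w z → z ≠ x → z ≠ y →
      G.dist x z = 2 ∧ G.dist y z = 2 := by
    intro z hwz hzx hzy
    have hzY : z ∈ Γ.Y := sideY hwz hwY'
    have hdwz : G.dist w z = 1 := SimpleGraph.dist_eq_one_iff_adj.mpr hwz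
    have hx2 : G.dist x z ≤ 2 := by
      have := hconn.dist_triangle (u := x) (v := w) (w := z)
      rw [hw1, hdwz] at this; omega
    have hy2' : G.dist y z ≤ 2 := by
      have := hconn.dist_triangle (u := y) (v := w) (w := z)
      rw [hdyw, hdwz] at this; omega
    have hne1x : G.dist x z ≠ 1 := fun h =>
      Γ.disj z ⟨hzY, sideY' (SimpleGraph.dist_eq_one_iff_adj.mp h) hx⟩
    have hne1y : G.dist y z ≠ 1 := fun h =>
      Γ.disj z ⟨hzY, sideY' (SimpleGraph.dist_eq_one_iff_adj.mp h) hyY⟩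
    have hne0x : G.dist x z ≠ 0 := fun h => hzx (hconn.dist_eq_zero_iff.mp h).symm
    have hne0y : G.dist y z ≠ 0 := fun h => hzy (hconn.dist_eq_zero_iff.mp h).symm
    constructor <;> omega
  have ufacts : ∀ u : V, G.Adj y u → ¬ G.Adj x u → G.dist w u = 2 := by
    intro u hyu hnxu
    have huY' : u ∈ Γ.Y' := sideY' hyu hyY
    have hdyu : G.dist y u = 1 := SimpleGraph.dist_eq_one_iff_adj.mpr hyu
    have hle : G.dist x u ≤ 3 := by
      have := hconn.dist_triangle (u := x) (v := y) (w := u)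
      rw [hy2, hdyu] at this; omega
    have h0 : G.dist x u ≠ 0 := fun h =>
      Γ.disj x ⟨hx, (hconn.dist_eq_zero_iff.mp h) ▸ huY'⟩
    have h1 : G.dist x u ≠ 1 := fun h => hnxu (SimpleGraph.dist_eq_one_iff_adj.mp h)
    have h2 : G.dist x u ≠ 2 := fun h => Γ.disj u ⟨dist2Y x hx u h, huY'⟩
    have hwle : G.dist w u ≤ 2 := by
      have := hconn.dist_triangle (u := w) (v := y) (w := u)
      rw [SimpleGraph.dist_comm (u := w) (v := y), hdyw, hdyu] at this; omega
    have hw0 : G.dist w u ≠ 0 := by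
      intro h
      have hwu : w = u := hconn.dist_eq_zero_iff.mp h
      rw [hwu] at hw1; omega
    have hw1' : G.dist w u ≠ 1 := fun h =>
      Γ.disj u ⟨sideY (SimpleGraph.dist_eq_one_iff_adj.mp h) hwY', huY'⟩
    omega
  -- notation for the two key finsets
  set S : Finset V := univ.filter (fun z => G.Adj w z ∧ z ≠ x ∧ z ≠ y) with hS
  set T : Finset V := univ.filter (fun u => G.Adj y u ∧ ¬ G.Adj x u) with hT
  -- degree of w is b' 0
  have degw : (univ.filter (fun t => G.Adj w t)).card = Γ.b' 0 := by
    rw [← Γ.hb' 0 w hwY' w SimpleGraph.dist_self]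
    exact (aux_ncard_filter (fun t =>
      ⟨fun h => h.1, fun h => ⟨h, SimpleGraph.dist_eq_one_iff_adj.mpr h⟩⟩)).symm
  -- degree of y is b 0
  have degy : (univ.filter (fun t => G.Adj y t)).card = Γ.b 0 := by
    rw [← Γ.hb 0 y hyY y SimpleGraph.dist_self]
    exact (aux_ncard_filter (fun t =>
      ⟨fun h => h.1, fun h => ⟨h, SimpleGraph.dist_eq_one_iff_adj.mpr h⟩⟩)).symm
  -- e3 : S.card + 2 = b' 0
  have e3 : S.card + 2 = Γ.b' 0 := by
    have hxmem : x ∈ univ.filter (fun t => G.Adj w t) := by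
      simp [Finset.mem_filter, hwx]
    have hymem : y ∈ (univ.filter (fun t => G.Adj w t)).erase x := by
      simp [Finset.mem_erase, Finset.mem_filter, hwy, hxy_ne.symm]
    have hSeq : S = ((univ.filter (fun t => G.Adj w t)).erase x).erase y := by
      ext z
      simp only [hS, Finset.mem_filter, Finset.mem_erase, Finset.mem_univ, true_and]
      tauto
    have h1 : ((univ.filter (fun t => G.Adj w t)).erase x).card
        = (univ.filter (fun t => G.Adj w t)).card - 1 :=
      Finset.card_erase_of_mem hxmem
    have h2 : (((univ.filter (fun t => G.Adj w t)).erase x).erase y).card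
        = ((univ.filter (fun t => G.Adj w t)).erase x).card - 1 :=
      Finset.card_erase_of_mem hymem
    have hpos : 1 ≤ ((univ.filter (fun t => G.Adj w t)).erase x).card :=
      Finset.card_pos.mpr ⟨y, hymem⟩
    rw [hSeq, h2, h1]
    rw [h1] at hpos
    omega
  -- common neighbours of x and y : c 2
  have cxy : (univ.filter (fun t => G.Adj y t ∧ G.Adj x t)).card = Γ.c 2 := by
    rw [← Γ.hc 2 (by norm_num) x hx y hy2]
    exact (aux_ncard_filter (fun t => by
      rw [show (2:ℕ) - 1 = 1 from rfl, SimpleGraph.dist_eq_one_iff_adj])).symm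
  -- e4 : T.card + c 2 = b 0
  have e4 : T.card + Γ.c 2 = Γ.b 0 := by
    have hsplit := aux_split (fun t => G.Adj y t) (fun t => G.Adj x t)
    rw [degy, cxy] at hsplit
    rw [hT]
    omega
  -- per-z fiber count
  have fiberz : ∀ z : V, G.Adj w z → z ≠ x → z ≠ y →
      (univ.filter (fun u => (G.Adj z u ∧ G.Adj y u) ∧ ¬ G.Adj x u)).card + γ 2 = Γ.c 2 := by
    intro z hwz hzx hzy
    obtain ⟨hxz2, hyz2⟩ := zfacts z hwz hzx hzy
    have cA : (univ.filter (fun u => G.Adj z u ∧ G.Adj y u)).card = Γ.c 2 := by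
      rw [← Γ.hc 2 (by norm_num) y hyY z hyz2]
      exact (aux_ncard_filter (fun t => by
        rw [show (2:ℕ) - 1 = 1 from rfl, SimpleGraph.dist_eq_one_iff_adj])).symm
    have cB : (univ.filter (fun u => (G.Adj z u ∧ G.Adj y u) ∧ G.Adj x u)).card = γ 2 := by
      rw [← hhom 2 (by norm_num) (by omega) x hx y hy2 z hxz2 hyz2]
      refine (aux_ncard_filter (fun t => ?_)).symm
      rw [show (2:ℕ) - 1 = 1 from rfl, SimpleGraph.dist_eq_one_iff_adj]
      tauto
    have hsplit := aux_split (fun u => G.Adj z u ∧ G.Adj y u) (fun u => G.Adj x u)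
    rw [cA, cB] at hsplit
    omega
  -- per-u fiber count
  have fiberu : ∀ u : V, G.Adj y u → ¬ G.Adj x u →
      (univ.filter (fun z => (G.Adj w z ∧ z ≠ x ∧ z ≠ y) ∧
        ((G.Adj z u ∧ G.Adj y u) ∧ ¬ G.Adj x u))).card + 1 = Γ.c' 2 := by
    intro u hyu hnxu
    have hwu2 : G.dist w u = 2 := ufacts u hyu hnxu
    have cC : (univ.filter (fun z => G.Adj u z ∧ G.Adj w z)).card = Γ.c' 2 := by
      rw [← Γ.hc' 2 (by norm_num) w hwY' u hwu2]
      exact (aux_ncard_filter (fun t => by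
        rw [show (2:ℕ) - 1 = 1 from rfl, SimpleGraph.dist_eq_one_iff_adj])).symm
    have heq : (univ.filter (fun z => (G.Adj w z ∧ z ≠ x ∧ z ≠ y) ∧
        ((G.Adj z u ∧ G.Adj y u) ∧ ¬ G.Adj x u)))
        = (univ.filter (fun z => G.Adj u z ∧ G.Adj w z)).erase y := by
      ext z
      simp only [Finset.mem_filter, Finset.mem_erase, Finset.mem_univ, true_and]
      constructor
      · rintro ⟨⟨hwz, hzx, hzy⟩, ⟨hzu, _⟩, _⟩
        exact ⟨hzy, hzu.symm, hwz⟩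
      · rintro ⟨hzy, huz, hwz⟩
        have hzx : z ≠ x := by
          rintro rfl
          exact hnxu huz.symm
        exact ⟨⟨hwz, hzx, hzy⟩, ⟨huz.symm, hyu⟩, hnxu⟩
    have hymem : y ∈ univ.filter (fun z => G.Adj u z ∧ G.Adj w z) := by
      simp [Finset.mem_filter, hyu.symm, hwy]
    have hpos : 1 ≤ (univ.filter (fun z => G.Adj u z ∧ G.Adj w z)).card :=
      Finset.card_pos.mpr ⟨y, hymem⟩
    rw [heq, Finset.card_erase_of_mem hymem, cC]
    rw [cC] at hpos
    omega
  -- the double-counted finset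
  set F : Finset (V × V) := univ.filter (fun p =>
      (G.Adj w p.1 ∧ p.1 ≠ x ∧ p.1 ≠ y) ∧
      ((G.Adj p.1 p.2 ∧ G.Adj y p.2) ∧ ¬ G.Adj x p.2)) with hF
  have e1 : F.card + S.card * γ 2 = S.card * Γ.c 2 := by
    have hF1 : F.card = ∑ z : V, (univ.filter (fun u =>
        (G.Adj w z ∧ z ≠ x ∧ z ≠ y) ∧
        ((G.Adj z u ∧ G.Adj y u) ∧ ¬ G.Adj x u))).card := by
      rw [hF, Finset.card_filter, Fintype.sum_prod_type]
      exact Finset.sum_congr rfl fun z _ => (Finset.card_filter _ _).symm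
    have hinner : ∀ z : V, (univ.filter (fun u =>
        (G.Adj w z ∧ z ≠ x ∧ z ≠ y) ∧
        ((G.Adj z u ∧ G.Adj y u) ∧ ¬ G.Adj x u))).card + (if (G.Adj w z ∧ z ≠ x ∧ z ≠ y) then γ 2 else 0)
        = (if (G.Adj w z ∧ z ≠ x ∧ z ≠ y) then Γ.c 2 else 0) := by
      intro z
      by_cases hz : G.Adj w z ∧ z ≠ x ∧ z ≠ y
      · rw [if_pos hz, if_pos hz]
        rw [Finset.filter_congr (fun u _ => by tauto :
          ∀ u ∈ (univ : Finset V), ((G.Adj w z ∧ z ≠ x ∧ z ≠ y) ∧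
            ((G.Adj z u ∧ G.Adj y u) ∧ ¬ G.Adj x u)) ↔ ((G.Adj z u ∧ G.Adj y u) ∧ ¬ G.Adj x u))]
        exact fiberz z hz.1 hz.2.1 hz.2.2
      · rw [if_neg hz, if_neg hz, Finset.filter_false_of_mem (fun u _ => by tauto),
          Finset.card_empty]
    calc F.card + S.card * γ 2
        = (∑ z : V, (univ.filter (fun u =>
            (G.Adj w z ∧ z ≠ x ∧ z ≠ y) ∧
            ((G.Adj z u ∧ G.Adj y u) ∧ ¬ G.Adj x u))).card)
          + ∑ z : V, (if (G.Adj w z ∧ z ≠ x ∧ z ≠ y) then γ 2 else 0) := by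
          rw [hF1, aux_sum_ite, hS]
      _ = ∑ z : V, ((univ.filter (fun u =>
            (G.Adj w z ∧ z ≠ x ∧ z ≠ y) ∧
            ((G.Adj z u ∧ G.Adj y u) ∧ ¬ G.Adj x u))).card
          + (if (G.Adj w z ∧ z ≠ x ∧ z ≠ y) then γ 2 else 0)) := by
          rw [Finset.sum_add_distrib]
      _ = ∑ z : V, (if (G.Adj w z ∧ z ≠ x ∧ z ≠ y) then Γ.c 2 else 0) :=
          Finset.sum_congr rfl fun z _ => hinner z
      _ = S.card * Γ.c 2 := by rw [aux_sum_ite, hS]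
  have e2 : F.card + T.card = T.card * Γ.c' 2 := by
    have hF2 : F.card = ∑ u : V, (univ.filter (fun z =>
        (G.Adj w z ∧ z ≠ x ∧ z ≠ y) ∧
        ((G.Adj z u ∧ G.Adj y u) ∧ ¬ G.Adj x u))).card := by
      rw [hF, Finset.card_filter, Fintype.sum_prod_type_right]
      exact Finset.sum_congr rfl fun u _ => (Finset.card_filter _ _).symm
    have hinner : ∀ u : V, (univ.filter (fun z =>
        (G.Adj w z ∧ z ≠ x ∧ z ≠ y) ∧
        ((G.Adj z u ∧ G.Adj y u) ∧ ¬ G.Adj x u))).card + (if (G.Adj y u ∧ ¬ G.Adj x u) then 1 else 0)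
        = (if (G.Adj y u ∧ ¬ G.Adj x u) then Γ.c' 2 else 0) := by
      intro u
      by_cases hu : G.Adj y u ∧ ¬ G.Adj x u
      · rw [if_pos hu, if_pos hu]
        exact fiberu u hu.1 hu.2
      · rw [if_neg hu, if_neg hu, Finset.filter_false_of_mem (fun z _ => by tauto),
          Finset.card_empty]
    calc F.card + T.card
        = (∑ u : V, (univ.filter (fun z =>
            (G.Adj w z ∧ z ≠ x ∧ z ≠ y) ∧
            ((G.Adj z u ∧ G.Adj y u) ∧ ¬ G.Adj x u))).card)
          + ∑ u : V, (if (G.Adj y u ∧ ¬ G.Adj x u) then 1 else 0) := by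
          rw [hF2, aux_sum_ite, hT, mul_one]
      _ = ∑ u : V, ((univ.filter (fun z =>
            (G.Adj w z ∧ z ≠ x ∧ z ≠ y) ∧
            ((G.Adj z u ∧ G.Adj y u) ∧ ¬ G.Adj x u))).card
          + (if (G.Adj y u ∧ ¬ G.Adj x u) then 1 else 0)) := by
          rw [Finset.sum_add_distrib]
      _ = ∑ u : V, (if (G.Adj y u ∧ ¬ G.Adj x u) then Γ.c' 2 else 0) :=
          Finset.sum_congr rfl fun u _ => hinner u
      _ = T.card * Γ.c' 2 := by rw [aux_sum_ite, hT]
  -- conclude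
  have e1' : (F.card : ℤ) + S.card * γ 2 = S.card * Γ.c 2 := by exact_mod_cast e1
  have e2' : (F.card : ℤ) + T.card = T.card * Γ.c' 2 := by exact_mod_cast e2
  have e3' : (S.card : ℤ) + 2 = Γ.b' 0 := by exact_mod_cast e3
  have e4' : (T.card : ℤ) + Γ.c 2 = Γ.b 0 := by exact_mod_cast e4
  linear_combination ((γ 2 : ℤ) - Γ.c 2) * e3' + ((Γ.c' 2 : ℤ) - 1) * e4' + e2' - e1'
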